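/- Let M be a seminormed abelian group, N a subgroup of M endowed with the induced seminorm, and L = M/N endowed with the quotient seminorm. Then the induced sequence of Hausdorff completions 0 → N̂ → M̂ → L̂ → 0 is exact: the group homomorphism M̂ → L̂ induced by the quotient map M → L is surjective, and its kernel equals the closure in M̂ of the image of N̂ under the map induced by the inclusion N → M. -/

import Mathlib

open UniformSpace

open NormedAddCommGroup in
private lemma completion_surj_aux {M : Type*} [SeminormedAddCommGroup M] (N : AddSubgroup M) :
    Function.Surjective (N.normedMk.completion : Completion M → Completion (M ⧸ N)) := by
  set f := N.normedMk
  have hyp : f.completion.SurjectiveOnWith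
      (toCompl : NormedAddGroupHom (M ⧸ N) (Completion (M ⧸ N))).range 2 := by
    rintro _ ⟨q, rfl⟩
    rcases eq_or_lt_of_le (norm_nonneg q) with hq | hq
    · refine ⟨0, ?_, by simp⟩
      have h0 : (toCompl q : Completion (M ⧸ N)) = 0 := by
        rw [← norm_eq_zero, norm_toCompl, ← hq]
      show f.completion 0 = toCompl q
      rw [h0]
      exact map_zero f.completion
    · obtain ⟨m, hm, hmn⟩ : ∃ m : M, QuotientAddGroup.mk' N m = q ∧ ‖m‖ < ‖q‖ + ‖q‖ :=
        QuotientAddGroup.exists_norm_mk_lt q hq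
      refine ⟨(m : Completion M), ?_, ?_⟩
      · rw [f.completion_coe]
        show ((N.normedMk m : M ⧸ N) : Completion (M ⧸ N)) = toCompl q
        rw [AddSubgroup.normedMk.apply, hm]; rfl
      · show ‖(m : Completion M)‖ ≤ 2 * ‖toCompl q‖
        rw [Completion.norm_coe, norm_toCompl]
        nlinarith [hmn]
  have h2 := controlled_closure_of_complete (f := f.completion) (by norm_num : (0:ℝ) < 2)
    (by norm_num : (0:ℝ) < 1) hyp
  intro y
  have hy : y ∈ (AddSubgroup.topologicalClosure
      (toCompl : NormedAddGroupHom (M ⧸ N) (Completion (M ⧸ N))).range) := by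
    have := denseRange_toCompl (G := M ⧸ N)
    have : closure (Set.range (toCompl : (M ⧸ N) → Completion (M ⧸ N))) = Set.univ :=
      this.closure_range
    have hy' : y ∈ closure (Set.range (toCompl : (M ⧸ N) → Completion (M ⧸ N))) := by
      rw [this]; trivial
    exact hy'
  obtain ⟨g, hg, -⟩ := h2 y hy
  exact ⟨g, hg⟩

open NormedAddCommGroup in
private lemma completion_ker_aux {M : Type*} [SeminormedAddCommGroup M] (N : AddSubgroup M)
    (x : Completion M) :
    N.normedMk.completion x = 0 ↔
      x ∈ closure (Set.range
        ((NormedAddGroupHom.incl N).completion : Completion N → Completion M)) := by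
  set f := N.normedMk
  set j := NormedAddGroupHom.incl N
  constructor
  · intro hx
    rw [SeminormedAddCommGroup.mem_closure_iff]
    intro ε ε_pos
    obtain ⟨_, ⟨g : M, rfl⟩, hg : ‖x - g‖ < ε/4⟩ :=
      SeminormedAddCommGroup.mem_closure_iff.mp (Completion.isDenseInducing_coe.dense x)
        (ε/4) (by linarith)
    have hnorm : ‖f.completion‖ ≤ 1 := by
      rw [f.norm_completion]; exact AddSubgroup.norm_normedMk_le N
    have hfg : ‖f g‖ < ε/4 := by
      have h1 : ((f g : M ⧸ N) : Completion (M ⧸ N)) = f.completion ((g : Completion M) - x) := by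
        rw [map_sub, hx, sub_zero, f.completion_coe]
      calc ‖f g‖ = ‖((f g : M ⧸ N) : Completion (M ⧸ N))‖ := (Completion.norm_coe _).symm
        _ = ‖f.completion ((g : Completion M) - x)‖ := by rw [h1]
        _ ≤ ‖f.completion‖ * ‖(g : Completion M) - x‖ := f.completion.le_opNorm _
        _ ≤ 1 * ‖(g : Completion M) - x‖ := by
            apply mul_le_mul_of_nonneg_right hnorm (norm_nonneg _)
        _ = ‖(g : Completion M) - x‖ := one_mul _
        _ = ‖x - g‖ := norm_sub_rev _ _
        _ < ε/4 := hg
    obtain ⟨m, hm, hmn⟩ : ∃ m : M, QuotientAddGroup.mk' N m = f g ∧ ‖m‖ < ‖f g‖ + ε/4 :=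
      QuotientAddGroup.exists_norm_mk_lt (f g) (show (0:ℝ) < ε/4 by linarith)
    have hmem : g - m ∈ N := by
      have : QuotientAddGroup.mk' N (g - m) = 0 := by
        rw [map_sub, hm]
        show f g - f g = 0
        simp
      rwa [QuotientAddGroup.mk'_apply, QuotientAddGroup.eq_zero_iff] at this
    refine ⟨((g - m : M) : Completion M), ⟨((⟨g - m, hmem⟩ : N) : Completion N), ?_⟩, ?_⟩
    · rw [j.completion_coe]; rfl
    · calc ‖x - ((g - m : M) : Completion M)‖
          = ‖(x - g) + (m : Completion M)‖ := by
            rw [Completion.coe_sub]; congr 1; abel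
        _ ≤ ‖x - (g : Completion M)‖ + ‖(m : Completion M)‖ := norm_add_le _ _
        _ < ε/4 + (ε/4 + ε/4) := by
            refine add_lt_add hg ?_
            rw [Completion.norm_coe]
            linarith [hmn, hfg]
        _ < ε := by linarith
  · intro hx
    have hcomp : f.comp j = 0 := by
      ext n
      show N.normedMk (n : M) = 0
      rw [AddSubgroup.normedMk.apply, QuotientAddGroup.mk'_apply, QuotientAddGroup.eq_zero_iff]
      exact n.2
    have hsub : Set.range (j.completion : Completion N → Completion M) ⊆
        (f.completion.ker : Set (Completion M)) := by
      rintro _ ⟨y, rfl⟩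
      show f.completion (j.completion y) = 0
      have : f.completion.comp j.completion = (f.comp j).completion :=
        NormedAddGroupHom.completion_comp j f
      have h0 : f.completion (j.completion y) = (f.comp j).completion y := by
        rw [← this]; rfl
      rw [h0, hcomp, NormedAddGroupHom.zero_completion]; rfl
    have := closure_minimal hsub f.completion.isClosed_ker hx
    exact this

/-- Exactness of Hausdorff completions: for a seminormed abelian group `M`, a subgroup `N`
with the induced seminorm and the quotient `M ⧸ N` with the quotient seminorm, the induced
map `M̂ → (M ⧸ N)^` is surjective and its kernel is the closure of the image of `N̂ → M̂`. -/
theorem completion_short_exact {M : Type*} [SeminormedAddCommGroup M] (N : AddSubgroup M) :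
    Function.Surjective
      ((QuotientAddGroup.mk' N).completion N.normedMk.continuous :
        Completion M → Completion (M ⧸ N)) ∧
    ∀ x : Completion M,
      (QuotientAddGroup.mk' N).completion N.normedMk.continuous x = 0 ↔
        x ∈ closure (Set.range
          (N.subtype.completion continuous_subtype_val : Completion N → Completion M)) := by
  exact ⟨completion_surj_aux N, completion_ker_aux N⟩
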